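/- For an integer N ≥ 2, ω = exp(2πi/N), and an integer a with 0 < a < N, one has ω^a/(1 - ω^a)² = (1/(2N)) ∑_{c=0}^{N-1} c·(N - c)·ω^{ac}. -/

import Mathlib

open Complex Finset

lemma aux_sum1 (x : ℂ) (n : ℕ) :
    (1 - x) ^ 2 * ∑ c ∈ Finset.range n, (c : ℂ) * x ^ c
      = x - (n : ℂ) * x ^ n + ((n : ℂ) - 1) * x ^ (n + 1) := by
  induction n with
  | zero => simp
  | succ n ih =>
    rw [Finset.sum_range_succ, mul_add, ih]
    push_cast
    ring

lemma aux_sum2 (x : ℂ) (n : ℕ) :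
    (1 - x) ^ 3 * ∑ c ∈ Finset.range n, (c : ℂ) ^ 2 * x ^ c
      = x * (1 + x) - (n : ℂ) ^ 2 * x ^ n + (2 * (n : ℂ) ^ 2 - 2 * n - 1) * x ^ (n + 1)
        - ((n : ℂ) - 1) ^ 2 * x ^ (n + 2) := by
  induction n with
  | zero => simp; ring
  | succ n ih =>
    rw [Finset.sum_range_succ, mul_add, ih]
    push_cast
    ring

theorem root_of_unity_quadratic_sum (N a : ℕ) (hN : 2 ≤ N) (ha0 : 0 < a) (ha : a < N) :
    Complex.exp (2 * Real.pi * Complex.I / N) ^ a /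
      (1 - Complex.exp (2 * Real.pi * Complex.I / N) ^ a) ^ 2
    = (1 / (2 * (N : ℂ))) * ∑ c ∈ Finset.range N,
        (c : ℂ) * ((N : ℂ) - (c : ℂ)) * Complex.exp (2 * Real.pi * Complex.I / N) ^ (a * c) := by
  have hN0 : N ≠ 0 := by omega
  set ω := Complex.exp (2 * Real.pi * Complex.I / N) with hω
  have hprim : IsPrimitiveRoot ω N := Complex.isPrimitiveRoot_exp N hN0
  set ζ := ω ^ a with hζdef
  have hζN : ζ ^ N = 1 := by
    rw [hζdef, ← pow_mul, mul_comm, pow_mul, hprim.pow_eq_one, one_pow]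
  have hζ1 : ζ ≠ 1 := hprim.pow_ne_one_of_pos_of_lt ha0.ne' ha
  have hsub : (1 : ℂ) - ζ ≠ 0 := sub_ne_zero.mpr (Ne.symm hζ1)
  have hNC : (N : ℂ) ≠ 0 := Nat.cast_ne_zero.mpr hN0
  have hrw : ∀ c : ℕ, ω ^ (a * c) = ζ ^ c := fun c => by rw [pow_mul]
  simp only [hrw]
  have hS : ∑ c ∈ Finset.range N, (c : ℂ) * ((N : ℂ) - (c : ℂ)) * ζ ^ c
      = (N : ℂ) * (∑ c ∈ Finset.range N, (c : ℂ) * ζ ^ c)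
        - ∑ c ∈ Finset.range N, (c : ℂ) ^ 2 * ζ ^ c := by
    rw [Finset.mul_sum, ← Finset.sum_sub_distrib]
    exact Finset.sum_congr rfl (fun c _ => by ring)
  have e1 : ζ ^ (N + 1) = ζ := by rw [pow_succ, hζN, one_mul]
  have e2 : ζ ^ (N + 2) = ζ * ζ := by rw [pow_add, hζN, one_mul]; ring
  have h1 := aux_sum1 ζ N
  have h2 := aux_sum2 ζ N
  rw [hζN, e1] at h1
  rw [hζN, e1, e2] at h2
  have hT1 : (∑ c ∈ Finset.range N, (c : ℂ) * ζ ^ c)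
      = (ζ - (N : ℂ) + ((N : ℂ) - 1) * ζ) / (1 - ζ) ^ 2 := by
    rw [eq_div_iff (pow_ne_zero 2 hsub)]
    linear_combination h1
  have hT2 : (∑ c ∈ Finset.range N, (c : ℂ) ^ 2 * ζ ^ c)
      = (ζ * (1 + ζ) - (N : ℂ) ^ 2 + (2 * (N : ℂ) ^ 2 - 2 * N - 1) * ζ
          - ((N : ℂ) - 1) ^ 2 * (ζ * ζ)) / (1 - ζ) ^ 3 := by
    rw [eq_div_iff (pow_ne_zero 3 hsub)]
    linear_combination h2
  rw [hS, hT1, hT2]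
  field_simp
  ring
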